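/- Let S be a finite nonabelian simple group, t a positive integer, and G = S^t with coordinate projections π_1, ..., π_t. Every maximal subgroup M of G is of exactly one of the following forms: (1) M = π_i^{-1}(H) for some 1 ≤ i ≤ t and some maximal subgroup H of S; (2) M = {x ∈ G : π_s(x) = α(π_r(x))} for some 1 ≤ r < s ≤ t and some automorphism α of S. -/

import Mathlib

open Subgroup

section Aux

variable {S : Type*} [Group S] [Finite S] [IsSimpleGroup S] {t : ℕ}

/-- The commutator-based induction: if `M` is subdirect and all the
"pair kernels" are full, then `M` hits every partial diagonal. -/
theorem aux_full (M : Subgroup (Fin t → S)) (hna : ¬ ∀ a b : S, a * b = b * a)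
    (hpair : ∀ r s : Fin t, r ≠ s → ∀ a, ∃ x ∈ M, x r = 1 ∧ x s = a)
    (hsub : ∀ i a, ∃ x ∈ M, x i = a) :
    ∀ T : Finset (Fin t), ∀ s ∉ T, ∀ a, ∃ x ∈ M, (∀ j ∈ T, x j = 1) ∧ x s = a := by
  classical
  intro T
  induction T using Finset.induction_on with
  | empty =>
    intro s _ a
    obtain ⟨x, hx, hxs⟩ := hsub s a
    exact ⟨x, hx, by simp, hxs⟩
  | @insert r T hrT IH =>
    intro s hs a
    have hsr : s ≠ r := fun h => hs (by simp [h])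
    have hsT : s ∉ T := fun h => hs (Finset.mem_insert_of_mem h)
    set N : Subgroup S :=
      { carrier := {a | ∃ x ∈ M, (∀ j ∈ T, x j = 1) ∧ x r = 1 ∧ x s = a}
        one_mem' := ⟨1, one_mem M, by simp, by simp, rfl⟩
        mul_mem' := by
          rintro a b ⟨x, hx, hxT, hxr, hxs⟩ ⟨y, hy, hyT, hyr, hys⟩
          exact ⟨x * y, mul_mem hx hy,
            fun j hj => by simp [Pi.mul_apply, hxT j hj, hyT j hj],
            by simp [Pi.mul_apply, hxr, hyr], by simp [Pi.mul_apply, hxs, hys]⟩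
        inv_mem' := by
          rintro a ⟨x, hx, hxT, hxr, hxs⟩
          exact ⟨x⁻¹, inv_mem hx, fun j hj => by simp [Pi.inv_apply, hxT j hj],
            by simp [Pi.inv_apply, hxr], by simp [Pi.inv_apply, hxs]⟩ } with hNdef
    have hN : N.Normal := by
      constructor
      rintro n ⟨x, hx, hxT, hxr, hxs⟩ g
      obtain ⟨y, hy, hyT, hys⟩ := IH s hsT g
      refine ⟨y * x * y⁻¹, mul_mem (mul_mem hy hx) (inv_mem hy), ?_, ?_, ?_⟩
      · intro j hj
        simp [Pi.mul_apply, Pi.inv_apply, hxT j hj, hyT j hj]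
      · simp [Pi.mul_apply, Pi.inv_apply, hxr]
      · simp [Pi.mul_apply, Pi.inv_apply, hxs, hys]
    rcases hN.eq_bot_or_eq_top with hbot | htop
    · exfalso
      apply hna
      intro a b
      obtain ⟨x, hx, hxT, hxs⟩ := IH s hsT a
      obtain ⟨y, hy, hyr, hys⟩ := hpair r s (fun h => hsr h.symm) b
      have hc : a * b * a⁻¹ * b⁻¹ ∈ N := by
        refine ⟨x * y * x⁻¹ * y⁻¹,
          mul_mem (mul_mem (mul_mem hx hy) (inv_mem hx)) (inv_mem hy), ?_, ?_, ?_⟩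
        · intro j hj
          simp [Pi.mul_apply, Pi.inv_apply, hxT j hj]
        · simp [Pi.mul_apply, Pi.inv_apply, hyr]
        · simp [Pi.mul_apply, Pi.inv_apply, hxs, hys]
      rw [hbot, Subgroup.mem_bot] at hc
      have : a * b * (b * a)⁻¹ = 1 := by
        rw [mul_inv_rev, ← mul_assoc]; exact hc
      rw [mul_inv_eq_one] at this
      exact this
    · have ha : a ∈ N := htop ▸ Subgroup.mem_top a
      obtain ⟨x, hx, hxT, hxr, hxs⟩ := ha
      refine ⟨x, hx, ?_, hxs⟩
      intro j hj
      rcases Finset.mem_insert.mp hj with h | h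
      · exact h ▸ hxr
      · exact hxT j h

theorem aux_top (M : Subgroup (Fin t → S)) (hna : ¬ ∀ a b : S, a * b = b * a)
    (hpair : ∀ r s : Fin t, r ≠ s → ∀ a, ∃ x ∈ M, x r = 1 ∧ x s = a)
    (hsub : ∀ i a, ∃ x ∈ M, x i = a) : M = ⊤ := by
  classical
  rw [eq_top_iff']
  intro x
  apply Subgroup.pi_mem_of_mulSingle_mem
  intro i
  obtain ⟨y, hy, hyT, hys⟩ :=
    aux_full M hna hpair hsub (Finset.univ.erase i) i (by simp) (x i)
  have hxy : y = Pi.mulSingle i (x i) := by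
    funext j
    by_cases h : j = i
    · subst h; simp [hys]
    · rw [Pi.mulSingle_eq_of_ne h]
      exact hyT j (Finset.mem_erase.mpr ⟨h, Finset.mem_univ j⟩)
  exact hxy ▸ hy

end Aux

/-- Every maximal subgroup of `S^t` (`S` finite nonabelian simple) is of exactly one of
the two forms: (1) the preimage of a maximal subgroup of `S` under a coordinate
projection; (2) a "diagonal" subgroup `{x | x s = α (x r)}` for some `r < s` and
`α ∈ Aut S`. -/
theorem stmt8 (S : Type*) [Group S] [Finite S] [IsSimpleGroup S]
    (hna : ¬ ∀ a b : S, a * b = b * a) (t : ℕ) (ht : 0 < t)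
    (M : Subgroup (Fin t → S)) (hM : IsCoatom M) :
    Xor'
      (∃ (i : Fin t) (H : Subgroup S), IsCoatom H ∧
        M = H.comap (Pi.evalMonoidHom (fun _ : Fin t => S) i))
      (∃ (r s : Fin t) (α : MulAut S), r < s ∧
        (M : Set (Fin t → S)) = {x | x s = α (x r)}) := by
  classical
  set π : (i : Fin t) → (Fin t → S) →* S := fun i => Pi.evalMonoidHom (fun _ : Fin t => S) i
    with hπdef
  have hπapp : ∀ (i : Fin t) (x : Fin t → S), π i x = x i := fun _ _ => rfl
  have hπsurj : ∀ i : Fin t, Function.Surjective (π i) :=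
    fun i b => ⟨Pi.mulSingle i b, by rw [hπapp]; exact Pi.mulSingle_eq_same (M := fun _ : Fin t => S) i b⟩
  -- The diagonal form implies all coordinate projections are surjective on M.
  have QtoFull : (∃ (r s : Fin t) (α : MulAut S), r < s ∧
      (M : Set (Fin t → S)) = {x | x s = α (x r)}) →
      ∀ i a, ∃ x ∈ M, x i = a := by
    rintro ⟨r, s, α, hrs, hset⟩ i a
    have hrs' : r ≠ s := ne_of_lt hrs
    have hmem : ∀ x : Fin t → S, x ∈ M ↔ x s = α (x r) := by
      intro x
      constructor
      · intro hx
        have : x ∈ (M : Set (Fin t → S)) := hx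
        rw [hset] at this; exact this
      · intro hx
        have : x ∈ ({x : Fin t → S | x s = α (x r)} : Set (Fin t → S)) := hx
        rw [← hset] at this; exact this
    by_cases h : i = s
    · subst h
      refine ⟨fun j => if j = i then a else α.symm a, ?_, by simp⟩
      rw [hmem]
      simp [hrs', hrs'.symm]
    · refine ⟨fun j => if j = s then α a else a, ?_, by simp [h]⟩
      rw [hmem]
      simp [hrs']
  by_cases hfull : ∀ i a, ∃ x ∈ M, x i = a
  · -- All projections surjective: diagonal case.
    right
    constructor
    · -- produce the diagonal
      have hpairfail : ¬ ∀ r s : Fin t, r ≠ s → ∀ a, ∃ x ∈ M, x r = 1 ∧ x s = a := by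
        intro h
        exact hM.1 (aux_top M hna h hfull)
      push_neg at hpairfail
      obtain ⟨r, s, hrs', a₀, ha₀⟩ := hpairfail
      set N : Subgroup S :=
        { carrier := {a | ∃ x ∈ M, x r = 1 ∧ x s = a}
          one_mem' := ⟨1, one_mem M, rfl, rfl⟩
          mul_mem' := by
            rintro a b ⟨x, hx, hxr, hxs⟩ ⟨y, hy, hyr, hys⟩
            exact ⟨x * y, mul_mem hx hy, by simp [Pi.mul_apply, hxr, hyr],
              by simp [Pi.mul_apply, hxs, hys]⟩
          inv_mem' := by
            rintro a ⟨x, hx, hxr, hxs⟩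
            exact ⟨x⁻¹, inv_mem hx, by simp [Pi.inv_apply, hxr],
              by simp [Pi.inv_apply, hxs]⟩ } with hNdef
      have hN : N.Normal := by
        constructor
        rintro n ⟨x, hx, hxr, hxs⟩ g
        obtain ⟨y, hy, hys⟩ := hfull s g
        refine ⟨y * x * y⁻¹, mul_mem (mul_mem hy hx) (inv_mem hy), ?_, ?_⟩
        · simp [Pi.mul_apply, Pi.inv_apply, hxr]
        · simp [Pi.mul_apply, Pi.inv_apply, hxs, hys]
      have hNbot : N = ⊥ := by
        rcases hN.eq_bot_or_eq_top with h | h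
        · exact h
        · exfalso
          have : a₀ ∈ N := h ▸ Subgroup.mem_top a₀
          obtain ⟨x, hx, hxr, hxs⟩ := this
          exact ha₀ x hx hxr hxs
      have hker : ∀ x ∈ M, x r = 1 → x s = 1 := by
        intro x hx hxr
        have : x s ∈ N := ⟨x, hx, hxr, rfl⟩
        rwa [hNbot, Subgroup.mem_bot] at this
      -- build the automorphism
      set ρ : M →* S := (π r).comp M.subtype with hρdef
      set σ : M →* S := (π s).comp M.subtype with hσdef
      have hρ : Function.Surjective ρ := by
        intro b
        obtain ⟨x, hx, hxr⟩ := hfull r b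
        exact ⟨⟨x, hx⟩, hxr⟩
      have hkerle : ρ.ker ≤ σ.ker := by
        rintro ⟨x, hx⟩ h
        rw [MonoidHom.mem_ker] at h ⊢
        exact hker x hx h
      set φ : S →* S := (ρ.liftOfSurjective hρ) ⟨σ, hkerle⟩ with hφdef
      have hφ : ∀ y : M, φ (ρ y) = σ y := by
        intro y
        exact ρ.liftOfRightInverse_comp_apply _ _ ⟨σ, hkerle⟩ y
      have hφsurj : Function.Surjective φ := by
        intro b
        obtain ⟨x, hx, hxs⟩ := hfull s b
        exact ⟨ρ ⟨x, hx⟩, by rw [hφ ⟨x, hx⟩]; exact hxs⟩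
      have hφinj : Function.Injective φ := by
        rw [← MonoidHom.ker_eq_bot_iff]
        rcases (MonoidHom.normal_ker φ).eq_bot_or_eq_top with h | h
        · exact h
        · exfalso
          obtain ⟨c, hc⟩ := exists_ne (1 : S)
          obtain ⟨d, hd⟩ := hφsurj c
          have : d ∈ φ.ker := h ▸ Subgroup.mem_top d
          rw [MonoidHom.mem_ker] at this
          exact hc (by rw [← hd, this])
      set e : S ≃* S := MulEquiv.ofBijective φ ⟨hφinj, hφsurj⟩ with hedef
      have heapp : ∀ a : S, e a = φ a := fun _ => rfl
      set D : Subgroup (Fin t → S) :=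
        { carrier := {x | x s = φ (x r)}
          one_mem' := by simp
          mul_mem' := by
            intro x y hx hy
            simp only [Set.mem_setOf_eq, Pi.mul_apply] at *
            rw [hx, hy, map_mul]
          inv_mem' := by
            intro x hx
            simp only [Set.mem_setOf_eq, Pi.inv_apply] at *
            rw [hx, map_inv] } with hDdef
      have hMD : M ≤ D := by
        intro x hx
        have := hφ ⟨x, hx⟩
        exact this.symm
      have hDne : D ≠ ⊤ := by
        intro h
        obtain ⟨c, hc⟩ := exists_ne (1 : S)
        have : Pi.mulSingle s c ∈ D := h ▸ Subgroup.mem_top _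
        have h2 : (Pi.mulSingle s c : Fin t → S) s = φ ((Pi.mulSingle s c : Fin t → S) r) :=
          this
        rw [Pi.mulSingle_eq_same, Pi.mulSingle_eq_of_ne hrs', map_one] at h2
        exact hc h2
      have hMeq : M = D := by
        rcases hMD.lt_or_eq with h | h
        · exact absurd (hM.2 D h) hDne
        · exact h
      rcases lt_or_gt_of_ne hrs' with h | h
      · refine ⟨r, s, e, h, ?_⟩
        ext x
        constructor
        · intro hx
          exact (hMeq ▸ hx : x ∈ D)
        · intro hx
          rw [hMeq]
          exact hx
      · refine ⟨s, r, e.symm, h, ?_⟩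
        ext x
        have hx' : x ∈ M ↔ x s = φ (x r) := by
          rw [hMeq]; exact Iff.rfl
        simp only [SetLike.mem_coe, Set.mem_setOf_eq, hx']
        constructor
        · intro hh
          rw [hh]
          exact (e.symm_apply_apply (x r)).symm
        · intro hh
          rw [hh]
          exact (e.apply_symm_apply (x s)).symm
    · -- not the preimage form
      rintro ⟨i, H, hH, hMc⟩
      obtain ⟨b, hb⟩ : ∃ b, b ∉ H := by
        by_contra h
        push_neg at h
        exact hH.1 ((Subgroup.eq_top_iff' H).mpr h)
      obtain ⟨x, hx, hxi⟩ := hfull i b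
      rw [hMc] at hx
      rw [Subgroup.mem_comap] at hx
      exact hb (hxi ▸ hx)
  · -- Some projection not surjective: preimage case.
    left
    refine ⟨?_, fun q => hfull (QtoFull q)⟩
    push_neg at hfull
    obtain ⟨i, a, hia⟩ := hfull
    set H : Subgroup S := M.map (π i) with hHdef
    have hHt : H ≠ ⊤ := by
      intro h
      have : a ∈ H := h ▸ Subgroup.mem_top a
      obtain ⟨x, hx, hxa⟩ := this
      exact hia x hx hxa
    have hle : M ≤ H.comap (π i) := fun x hx => Subgroup.mem_comap.mpr ⟨x, hx, rfl⟩
    have hct : H.comap (π i) ≠ ⊤ := by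
      intro h
      apply hHt
      have := Subgroup.map_comap_eq_self_of_surjective (hπsurj i) H
      rw [h] at this
      rw [← this]
      rw [← MonoidHom.range_eq_map]
      exact (MonoidHom.range_eq_top).mpr (hπsurj i)
    have hMc : M = H.comap (π i) := by
      rcases hle.lt_or_eq with h | h
      · exact absurd (hM.2 _ h) hct
      · exact h
    have hHco : IsCoatom H := by
      refine ⟨hHt, ?_⟩
      intro b hb
      have h1 : H.comap (π i) < b.comap (π i) := by
        refine lt_of_le_of_ne (Subgroup.comap_mono hb.le) ?_
        intro h
        apply hb.ne
        have := congrArg (Subgroup.map (π i)) h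
        rwa [Subgroup.map_comap_eq_self_of_surjective (hπsurj i),
          Subgroup.map_comap_eq_self_of_surjective (hπsurj i)] at this
      have h2 : b.comap (π i) = ⊤ := hM.2 _ (hMc ▸ h1)
      have := Subgroup.map_comap_eq_self_of_surjective (hπsurj i) b
      rw [h2] at this
      rw [← this, ← MonoidHom.range_eq_map]
      exact (MonoidHom.range_eq_top).mpr (hπsurj i)
    exact ⟨i, H, hHco, hMc⟩
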